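/- Let G be a non-abelian group of order p^3 for an odd prime p. Then cod(G) = { 1, p, p^2 }. -/

import Mathlib

open scoped Pointwise

/-- A representation is irreducible if the space is nontrivial and the only
invariant subspaces are `⊥` and `⊤`. -/
def Rep.IsIrreducible {G V : Type*} [Group G] [AddCommGroup V] [Module ℂ V]
    (ρ : Representation ℂ G V) : Prop :=
  Nontrivial V ∧ ∀ W : Submodule ℂ V, (∀ g : G, ∀ v ∈ W, ρ g v ∈ W) → W = ⊥ ∨ W = ⊤

/-- The kernel of a representation. -/
noncomputable def Rep.ker {G V : Type*} [Group G] [AddCommGroup V] [Module ℂ V]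
    (ρ : Representation ℂ G V) : Subgroup G := (Representation.asGroupHom ρ).ker

/-- The codegree of (the character of) a representation: `|G : ker| / degree`. -/
noncomputable def Rep.cod {G V : Type*} [Group G] [AddCommGroup V] [Module ℂ V]
    (ρ : Representation ℂ G V) : ℕ := (Rep.ker ρ).index / Module.finrank ℂ V

/-- The set of codegrees of irreducible (complex) characters of `G`. -/
def codSet (G : Type*) [Group G] : Set ℕ :=
  {n | ∃ (V : Type) (_ : AddCommGroup V) (_ : Module ℂ V) (_ : FiniteDimensional ℂ V)
      (ρ : Representation ℂ G V), Rep.IsIrreducible ρ ∧ Rep.cod ρ = n}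

/-- The set of codegrees of nonlinear irreducible characters of `G`. -/
def nlCodSet (G : Type*) [Group G] : Set ℕ :=
  {n | ∃ (V : Type) (_ : AddCommGroup V) (_ : Module ℂ V) (_ : FiniteDimensional ℂ V)
      (ρ : Representation ℂ G V), Rep.IsIrreducible ρ ∧ 1 < Module.finrank ℂ V ∧
      Rep.cod ρ = n}

/-- The set of degrees of irreducible characters of `G`. -/
def cdSet (G : Type*) [Group G] : Set ℕ :=
  {n | ∃ (V : Type) (_ : AddCommGroup V) (_ : Module ℂ V) (_ : FiniteDimensional ℂ V)
      (ρ : Representation ℂ G V), Rep.IsIrreducible ρ ∧ Module.finrank ℂ V = n}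

/-- `G` is a VZ-group: every nonlinear irreducible character vanishes off the center. -/
def IsVZ (G : Type*) [Group G] : Prop :=
  ∀ (V : Type) (_ : AddCommGroup V) (_ : Module ℂ V) (_ : FiniteDimensional ℂ V)
    (ρ : Representation ℂ G V), Rep.IsIrreducible ρ → 1 < Module.finrank ℂ V →
    ∀ g ∉ Subgroup.center G, LinearMap.trace ℂ V (ρ g) = 0

/-- `G` is a Camina group: the conjugacy class of every `g ∉ G'` is `gG'`. -/
def IsCamina (G : Type*) [Group G] : Prop :=
  ∀ g : G, g ∉ commutator G → {h | IsConj g h} = g • (commutator G : Set G)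

namespace StmtAux

open scoped commutatorElement

variable {G : Type*} [Group G]

section RepBasics

variable {V : Type*} [AddCommGroup V] [Module ℂ V]

lemma mem_rep_ker {ρ : Representation ℂ G V} {g : G} :
    g ∈ Rep.ker ρ ↔ ρ g = 1 := by
  rw [Rep.ker, MonoidHom.mem_ker, Units.ext_iff, Representation.asGroupHom_apply, Units.val_one]

instance rep_ker_normal (ρ : Representation ℂ G V) : (Rep.ker ρ).Normal :=
  MonoidHom.normal_ker _

/-- Restriction of a representation to an invariant submodule. -/
def subRep (ρ : Representation ℂ G V) (U : Submodule ℂ V)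
    (hU : ∀ g : G, ∀ v ∈ U, ρ g v ∈ U) : Representation ℂ G U where
  toFun g := (ρ g).restrict (hU g)
  map_one' := by
    ext v
    simp [LinearMap.restrict_apply]
  map_mul' g h := by
    ext v
    simp [LinearMap.restrict_apply, Module.End.mul_apply]

@[simp] lemma subRep_apply (ρ : Representation ℂ G V) (U : Submodule ℂ V)
    (hU : ∀ g : G, ∀ v ∈ U, ρ g v ∈ U) (g : G) (v : U) :
    (subRep ρ U hU g v : V) = ρ g (v : V) := rfl

/-- Transport of a representation along a linear equivalence. -/
def congRep (ρ : Representation ℂ G V) {V' : Type*} [AddCommGroup V'] [Module ℂ V']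
    (e : V ≃ₗ[ℂ] V') : Representation ℂ G V' where
  toFun g := e.conj (ρ g)
  map_one' := by
    show e.conj (ρ 1) = 1
    rw [map_one]
    exact e.conj_id
  map_mul' g h := by
    show e.conj (ρ (g * h)) = e.conj (ρ g) * e.conj (ρ h)
    rw [map_mul]
    ext v
    simp [LinearEquiv.conj_apply_apply, Module.End.mul_apply]

@[simp] lemma congRep_apply (ρ : Representation ℂ G V) {V' : Type*} [AddCommGroup V']
    [Module ℂ V'] (e : V ≃ₗ[ℂ] V') (g : G) (v : V') :
    congRep ρ e g v = e (ρ g (e.symm v)) := rfl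

lemma congRep_ker (ρ : Representation ℂ G V) {V' : Type*} [AddCommGroup V'] [Module ℂ V']
    (e : V ≃ₗ[ℂ] V') : Rep.ker (congRep ρ e) = Rep.ker ρ := by
  ext g
  rw [mem_rep_ker, mem_rep_ker]
  constructor
  · intro h
    ext v
    have := congrFun (congrArg DFunLike.coe h) (e v)
    simpa [LinearEquiv.symm_apply_apply] using e.injective (by simpa using this)
  · intro h
    ext v
    simp [congRep_apply, h]

lemma congRep_irr {ρ : Representation ℂ G V} {V' : Type*} [AddCommGroup V'] [Module ℂ V']
    (e : V ≃ₗ[ℂ] V') (hirr : Rep.IsIrreducible ρ) : Rep.IsIrreducible (congRep ρ e) := by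
  obtain ⟨hnt, hmin⟩ := hirr
  constructor
  · obtain ⟨x, y, hxy⟩ := hnt
    exact ⟨e x, e y, fun h => hxy (e.injective h)⟩
  · intro W' hW'
    have hinv : ∀ g : G, ∀ v ∈ W'.comap (e : V →ₗ[ℂ] V'), ρ g v ∈ W'.comap (e : V →ₗ[ℂ] V') := by
      intro g v hv
      simp only [Submodule.mem_comap, LinearEquiv.coe_coe] at hv ⊢
      have := hW' g (e v) hv
      simpa [LinearEquiv.symm_apply_apply] using this
    rcases hmin _ hinv with h | h
    · left
      rw [eq_bot_iff]
      intro w hw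
      have : e.symm w ∈ W'.comap (e : V →ₗ[ℂ] V') := by
        simp [Submodule.mem_comap, hw]
      rw [h] at this
      simpa using (by simpa using congrArg e this : w = e 0)
    · right
      rw [eq_top_iff]
      intro w _
      have : e.symm w ∈ W'.comap (e : V →ₗ[ℂ] V') := h ▸ Submodule.mem_top
      simpa [Submodule.mem_comap] using this

lemma smul_one_eq_one_iff {c : ℂ} [Nontrivial V] :
    c • (1 : Module.End ℂ V) = 1 ↔ c = 1 := by
  constructor
  · intro h
    obtain ⟨v, hv⟩ := exists_ne (0 : V)
    have := congrFun (congrArg DFunLike.coe h) v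
    simp only [LinearMap.smul_apply, Module.End.one_apply] at this
    have h2 : (c - 1) • v = 0 := by rw [sub_smul, one_smul, this, sub_self]
    rcases smul_eq_zero.mp h2 with h3 | h3
    · linear_combination h3
    · exact absurd h3 hv
  · rintro rfl; rw [one_smul]

end RepBasics

section Schur

variable {V : Type*} [AddCommGroup V] [Module ℂ V] [FiniteDimensional ℂ V]

lemma schur_scalar {ρ : Representation ℂ G V} (hirr : Rep.IsIrreducible ρ)
    (T : Module.End ℂ V) (hT : ∀ g : G, T * ρ g = ρ g * T) : ∃ c : ℂ, T = c • 1 := by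
  haveI := hirr.1
  obtain ⟨c, hc⟩ := Module.End.exists_eigenvalue T
  refine ⟨c, ?_⟩
  have hinv : ∀ g : G, ∀ v ∈ T.eigenspace c, ρ g v ∈ T.eigenspace c := by
    intro g v hv
    rw [Module.End.mem_eigenspace_iff] at hv ⊢
    have := congrFun (congrArg DFunLike.coe (hT g)) v
    simp only [Module.End.mul_apply] at this
    rw [this, hv, map_smul]
  rcases hirr.2 _ hinv with h | h
  · exact absurd h hc
  · ext v
    have hv : v ∈ T.eigenspace c := h ▸ Submodule.mem_top
    rw [Module.End.mem_eigenspace_iff] at hv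
    simpa using hv

lemma finrank_eq_one_of_commute {ρ : Representation ℂ G V} (hirr : Rep.IsIrreducible ρ)
    (hcomm : ∀ g h : G, ρ g * ρ h = ρ h * ρ g) : Module.finrank ℂ V = 1 := by
  haveI := hirr.1
  obtain ⟨v, hv⟩ := exists_ne (0 : V)
  have hinv : ∀ g : G, ∀ w ∈ (ℂ ∙ v), ρ g w ∈ (ℂ ∙ v) := by
    intro g w hw
    obtain ⟨c, hc⟩ := schur_scalar hirr (ρ g) (fun h => hcomm g h)
    rw [hc]
    simpa using Submodule.smul_mem _ c hw
  rcases hirr.2 _ hinv with h | h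
  · exact absurd h (by simpa [Submodule.span_singleton_eq_bot] using hv)
  · rw [← finrank_top ℂ V, ← h, finrank_span_singleton hv]

lemma end_scalar_of_finrank_one (h1 : Module.finrank ℂ V = 1) (T : Module.End ℂ V) :
    ∃ c : ℂ, T = c • 1 := by
  have b := Module.finBasisOfFinrankEq ℂ V h1
  refine ⟨b.repr (T (b 0)) 0, b.ext fun i => ?_⟩
  have h0 : i = 0 := Subsingleton.elim _ _
  subst h0
  have := b.sum_repr (T (b 0))
  simp only [Fin.sum_univ_one] at this
  simpa using this.symm

lemma commutator_le_ker_of_finrank_one (ρ : Representation ℂ G V)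
    (h1 : Module.finrank ℂ V = 1) : commutator G ≤ Rep.ker ρ := by
  rw [commutator_def, Subgroup.commutator_le]
  intro g _ h _
  have hcomm : ∀ a b : G, ρ a * ρ b = ρ b * ρ a := by
    intro a b
    obtain ⟨c, hc⟩ := end_scalar_of_finrank_one h1 (ρ a)
    obtain ⟨d, hd⟩ := end_scalar_of_finrank_one h1 (ρ b)
    rw [hc, hd, smul_mul_assoc, mul_smul_comm, smul_mul_assoc, mul_smul_comm, smul_comm]
  rw [mem_rep_ker, commutatorElement_def]
  have : ρ (g * h * g⁻¹ * h⁻¹) = ρ g * ρ g⁻¹ * ρ h * ρ h⁻¹ := by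
    rw [map_mul, map_mul, map_mul]
    rw [mul_assoc (ρ g), hcomm (h) (g⁻¹), ← mul_assoc]
  rw [this, ← map_mul, ← map_mul, ← map_mul]
  simp

end Schur

section CommonEig

lemma exists_common_eigenvector : ∀ (n : ℕ) (V : Type*) [AddCommGroup V] [Module ℂ V]
    [FiniteDimensional ℂ V], Module.finrank ℂ V = n → Nontrivial V →
    ∀ S : Set (Module.End ℂ V), (∀ T ∈ S, ∀ T' ∈ S, T * T' = T' * T) →
    ∃ v : V, v ≠ 0 ∧ ∀ T ∈ S, ∃ c : ℂ, T v = c • v := by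
  intro n
  induction n using Nat.strong_induction_on with
  | _ n ih =>
    intro V _ _ _ hn hnt S hS
    by_cases hsc : ∀ T ∈ S, ∃ c : ℂ, T = c • 1
    · obtain ⟨v, hv⟩ := exists_ne (0 : V)
      refine ⟨v, hv, fun T hT => ?_⟩
      obtain ⟨c, hc⟩ := hsc T hT
      exact ⟨c, by rw [hc]; simp⟩
    · push_neg at hsc
      obtain ⟨T₀, hT₀S, hT₀⟩ := hsc
      obtain ⟨μ, hμ⟩ := Module.End.exists_eigenvalue T₀
      set E := T₀.eigenspace μ with hE
      have hEbot : E ≠ ⊥ := hμ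
      have hEtop : E ≠ ⊤ := by
        intro h
        refine hT₀ μ ?_
        ext v
        have hv : v ∈ E := h ▸ Submodule.mem_top
        rw [hE, Module.End.mem_eigenspace_iff] at hv
        simpa using hv
      have hmap : ∀ T ∈ S, ∀ v ∈ E, T v ∈ E := by
        intro T hT v hv
        rw [hE, Module.End.mem_eigenspace_iff] at hv ⊢
        have := congrFun (congrArg DFunLike.coe (hS T hT T₀ hT₀S)) v
        simp only [Module.End.mul_apply] at this
        rw [← this, hv, map_smul]
      haveI : Nontrivial E := Submodule.nontrivial_iff_ne_bot.mpr hEbot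
      have hlt : Module.finrank ℂ E < n := hn ▸ Submodule.finrank_lt hEtop
      set S' : Set (Module.End ℂ E) :=
        {F | ∃ T : Module.End ℂ V, ∃ hT : T ∈ S, F = T.restrict (hmap T hT)} with hS'
      have hS'comm : ∀ F ∈ S', ∀ F' ∈ S', F * F' = F' * F := by
        rintro F ⟨T, hT, rfl⟩ F' ⟨T', hT', rfl⟩
        ext v
        have := congrFun (congrArg DFunLike.coe (hS T hT T' hT')) (v : V)
        simp only [Module.End.mul_apply] at this ⊢
        simp only [LinearMap.restrict_coe_apply]
        exact this
      obtain ⟨v, hv0, hv⟩ := ih _ hlt E rfl inferInstance S' hS'comm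
      refine ⟨(v : V), by simpa using hv0, fun T hT => ?_⟩
      obtain ⟨c, hc⟩ := hv (T.restrict (hmap T hT)) ⟨T, hT, rfl⟩
      refine ⟨c, ?_⟩
      have := congrArg (Subtype.val) hc
      simpa [LinearMap.restrict_apply] using this

end CommonEig

section MinSub

variable {V : Type*} [AddCommGroup V] [Module ℂ V] [FiniteDimensional ℂ V]

lemma exists_irreducible_subrep (ρ : Representation ℂ G V) (hnt : Nontrivial V) :
    ∃ (W : Submodule ℂ V) (hW : ∀ g : G, ∀ v ∈ W, ρ g v ∈ W),
      W ≠ ⊥ ∧ Rep.IsIrreducible (subRep ρ W hW) := by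
  classical
  have hP : ∃ n : ℕ, ∃ (W : Submodule ℂ V) (_ : ∀ g : G, ∀ v ∈ W, ρ g v ∈ W),
      W ≠ ⊥ ∧ Module.finrank ℂ W = n := by
    refine ⟨Module.finrank ℂ V, ⊤, fun g v _ => Submodule.mem_top, ?_, finrank_top ℂ V⟩
    intro h
    obtain ⟨v, hv⟩ := exists_ne (0 : V)
    exact hv (by simpa [h] using (Submodule.mem_top : v ∈ (⊤ : Submodule ℂ V)))
  obtain ⟨W, hW, hWbot, hWrank⟩ := Nat.find_spec hP
  refine ⟨W, hW, hWbot, ?_⟩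
  constructor
  · exact Submodule.nontrivial_iff_ne_bot.mpr hWbot
  · intro W' hW'
    by_cases hb : W' = ⊥
    · exact Or.inl hb
    right
    set W'' := W'.map W.subtype with hW''def
    have hW''inv : ∀ g : G, ∀ v ∈ W'', ρ g v ∈ W'' := by
      rintro g v hv
      obtain ⟨y, hy, rfl⟩ := Submodule.mem_map.mp hv
      have := hW' g y hy
      exact Submodule.mem_map.mpr ⟨subRep ρ W hW g y, this, rfl⟩
    have hW''bot : W'' ≠ ⊥ := by
      intro h
      refine hb ?_
      rw [eq_bot_iff]
      intro y hy
      have : (y : V) ∈ W'' := Submodule.mem_map.mpr ⟨y, hy, rfl⟩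
      rw [h, Submodule.mem_bot] at this
      simpa [Submodule.mem_bot] using Subtype.ext this
    have hle : Nat.find hP ≤ Module.finrank ℂ W'' :=
      Nat.find_min' hP ⟨W'', hW''inv, hW''bot, rfl⟩
    have heq : Module.finrank ℂ W'' = Module.finrank ℂ W' :=
      Submodule.finrank_map_subtype_eq W W'
    have : Module.finrank ℂ W ≤ Module.finrank ℂ W' := by omega
    exact Submodule.eq_top_of_finrank_eq (le_antisymm (Submodule.finrank_le W') (by
      simpa [finrank_top] using this))

end MinSub

section Scalar

/-- The one-dimensional representation attached to a character `χ : G →* ℂˣ`. -/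
noncomputable def scalarRep (χ : G →* ℂˣ) : Representation ℂ G ℂ where
  toFun g := (χ g : ℂ) • 1
  map_one' := by simp
  map_mul' g h := by
    ext
    simp [smul_smul, mul_assoc, mul_comm]

lemma scalarRep_irr (χ : G →* ℂˣ) : Rep.IsIrreducible (scalarRep χ) := by
  refine ⟨inferInstance, fun W hW => ?_⟩
  by_cases hb : W = ⊥
  · exact Or.inl hb
  right
  obtain ⟨x, hxW, hx⟩ := Submodule.exists_mem_ne_zero_of_ne_bot hb
  rw [eq_top_iff]
  intro y _
  have : y = (y * x⁻¹) • x := by rw [smul_eq_mul, inv_mul_cancel_right₀ hx]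
  rw [this]
  exact Submodule.smul_mem _ _ hxW

lemma scalarRep_ker (χ : G →* ℂˣ) : Rep.ker (scalarRep χ) = χ.ker := by
  ext g
  rw [mem_rep_ker, MonoidHom.mem_ker]
  constructor
  · intro h
    have := congrFun (congrArg DFunLike.coe h) (1 : ℂ)
    simp only [scalarRep] at this
    apply Units.ext
    simpa using this
  · intro h
    show (χ g : ℂ) • (1 : Module.End ℂ ℂ) = 1
    rw [h]
    simp

lemma scalarRep_cod (χ : G →* ℂˣ) : Rep.cod (scalarRep χ) = χ.ker.index := by
  rw [Rep.cod, scalarRep_ker, Module.finrank_self, Nat.div_one]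

end Scalar

section CyclicChar

/-- Any finite cyclic group admits an injective character into `ℂˣ`. -/
lemma exists_injective_char (Q : Type*) [Group Q] [Finite Q] [IsCyclic Q] :
    ∃ φ : Q →* ℂˣ, Function.Injective φ := by
  set n := Nat.card Q with hn
  have hn0 : n ≠ 0 := Nat.card_pos.ne'
  haveI : NeZero n := ⟨hn0⟩
  have hζ : IsPrimitiveRoot (Complex.exp (2 * Real.pi * Complex.I / n)) n :=
    Complex.isPrimitiveRoot_exp n hn0
  have hu : IsPrimitiveRoot (hζ.isUnit hn0).unit n :=
    hζ.isUnit_unit hn0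
  set u : ℂˣ := (hζ.isUnit hn0).unit with hudef
  set f : ℤ →+ Additive ℂˣ := zmultiplesHom (Additive ℂˣ) (Additive.ofMul u) with hf
  have hfn : f n = 0 := by
    show ((n : ℤ) • Additive.ofMul u) = 0
    have : u ^ (n : ℤ) = 1 := by
      rw [zpow_natCast, hu.pow_eq_one]
    rw [← ofMul_zpow, this, ofMul_one]
  set ψ : ZMod n →+ Additive ℂˣ := ZMod.lift n ⟨f, hfn⟩ with hψ
  set φ₀ : Multiplicative (ZMod n) →* ℂˣ := ψ.toMultiplicativeLeft with hφ₀
  have hφ₀inj : Function.Injective φ₀ := by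
    rw [injective_iff_map_eq_one]
    intro a ha
    have hval : Multiplicative.toAdd a = (((Multiplicative.toAdd a).val : ℤ) : ZMod n) := by
      rw [Int.cast_natCast, ZMod.natCast_rightInverse _]
    have : ψ (Multiplicative.toAdd a) = 0 := by
      have : Additive.toMul (ψ (Multiplicative.toAdd a)) = 1 := ha
      simpa using this
    rw [hval] at this
    rw [hψ, ZMod.lift_coe] at this
    have hpow : u ^ ((Multiplicative.toAdd a).val : ℤ) = 1 := by
      have := congrArg Additive.toMul this
      simpa [hf, ← ofMul_zpow] using this
    rw [zpow_natCast] at hpow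
    have hdvd : n ∣ (Multiplicative.toAdd a).val := hu.dvd_of_pow_eq_one _ hpow
    have hlt : (Multiplicative.toAdd a).val < n := ZMod.val_lt _
    have h0 : (Multiplicative.toAdd a).val = 0 := Nat.eq_zero_of_dvd_of_lt hdvd hlt
    have : Multiplicative.toAdd a = 0 := by
      rwa [ZMod.val_eq_zero] at h0
    exact (by simpa using congrArg Multiplicative.ofAdd this : a = 1)
  obtain e := (zmodCyclicMulEquiv (inferInstance : IsCyclic Q)).symm
  exact ⟨φ₀.comp e.toMonoidHom, hφ₀inj.comp e.injective⟩

end CyclicChar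

section GroupFacts

variable {p : ℕ} [Finite G]

lemma card_center_eq (hp : p.Prime) (hcard : Nat.card G = p ^ 3)
    (hna : ¬ ∀ a b : G, a * b = b * a) : Nat.card (Subgroup.center G) = p := by
  haveI : Fact p.Prime := ⟨hp⟩
  obtain ⟨k, hk0, hk⟩ := IsPGroup.card_center_eq_prime_pow hcard (by norm_num)
  have hidx : (Subgroup.center G).index ∣ p ^ 3 := hcard ▸ Subgroup.index_dvd_card _
  obtain ⟨j, hj3, hjeq⟩ := (Nat.dvd_prime_pow hp).mp hidx
  have hmul : Nat.card (Subgroup.center G) * (Subgroup.center G).index = p ^ 3 :=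
    hcard ▸ Subgroup.card_mul_index _
  rw [hk, hjeq, ← pow_add] at hmul
  have hkj : k + j = 3 := Nat.pow_right_injective hp.two_le hmul
  have hk2 : k < 2 := by
    by_contra hk2
    push_neg at hk2
    have hjle : j ≤ 1 := by omega
    have : Nat.card (G ⧸ Subgroup.center G) ∣ p := by
      rw [← Subgroup.index_eq_card, hjeq]
      calc p ^ j ∣ p ^ 1 := pow_dvd_pow p hjle
        _ = p := pow_one p
    haveI : IsCyclic (G ⧸ Subgroup.center G) := isCyclic_of_card_dvd_prime this
    letI := commGroupOfCyclicCenterQuotient (QuotientGroup.mk' (Subgroup.center G))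
      (QuotientGroup.ker_mk' _).le
    exact hna fun a b => mul_comm a b
  have : k = 1 := by omega
  rw [hk, this, pow_one]

lemma commutator_le_center' (hp : p.Prime) (hcard : Nat.card G = p ^ 3)
    (hna : ¬ ∀ a b : G, a * b = b * a) : commutator G ≤ Subgroup.center G := by
  haveI : Fact p.Prime := ⟨hp⟩
  have hZ : Nat.card (Subgroup.center G) = p := card_center_eq hp hcard hna
  have hQ : Nat.card (G ⧸ Subgroup.center G) = p ^ 2 := by
    have hmul : Nat.card (Subgroup.center G) * (Subgroup.center G).index = p ^ 3 :=
      hcard ▸ Subgroup.card_mul_index _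
    rw [hZ] at hmul
    rw [← Subgroup.index_eq_card]
    have hp0 : 0 < p := hp.pos
    nlinarith [hmul]
  have hcomm : ∀ a b : G ⧸ Subgroup.center G, a * b = b * a :=
    IsPGroup.commutative_of_card_eq_prime_sq hQ
  rw [commutator_def, Subgroup.commutator_le]
  intro g _ h _
  rw [← QuotientGroup.ker_mk' (Subgroup.center G), MonoidHom.mem_ker]
  rw [map_commutatorElement]
  exact commutatorElement_eq_one_iff_mul_comm.mpr (hcomm _ _)

lemma exists_central_z (hp : p.Prime) (hcard : Nat.card G = p ^ 3)
    (hna : ¬ ∀ a b : G, a * b = b * a) :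
    ∃ z : G, z ∈ commutator G ∧ z ∈ Subgroup.center G ∧ z ≠ 1 ∧ z ^ p = 1 := by
  push_neg at hna
  obtain ⟨a, b, hab⟩ := hna
  refine ⟨⁅a, b⁆, Subgroup.commutator_mem_commutator (Subgroup.mem_top a) (Subgroup.mem_top b),
    ?_, ?_, ?_⟩
  · exact commutator_le_center' hp hcard (by push_neg; exact ⟨a, b, hab⟩)
      (Subgroup.commutator_mem_commutator (Subgroup.mem_top a) (Subgroup.mem_top b))
  · exact fun h => hab (commutatorElement_eq_one_iff_mul_comm.mp h)
  · have hz : ⁅a, b⁆ ∈ Subgroup.center G :=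
      commutator_le_center' hp hcard (by push_neg; exact ⟨a, b, hab⟩)
        (Subgroup.commutator_mem_commutator (Subgroup.mem_top a) (Subgroup.mem_top b))
    have : orderOf (⟨⁅a, b⁆, hz⟩ : Subgroup.center G) ∣ p := by
      rw [← card_center_eq hp hcard (by push_neg; exact ⟨a, b, hab⟩)]
      exact orderOf_dvd_natCard _
    rw [Subgroup.orderOf_mk] at this
    obtain ⟨m, hm⟩ := this
    calc ⁅a, b⁆ ^ p = (⁅a, b⁆ ^ orderOf ⁅a, b⁆) ^ m := by rw [← pow_mul, ← hm]
    _ = 1 := by rw [pow_orderOf_eq_one, one_pow]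

lemma exists_maximal_abelian (hp : p.Prime) (hcard : Nat.card G = p ^ 3)
    (hna : ¬ ∀ a b : G, a * b = b * a) :
    ∃ M : Subgroup G, M.Normal ∧ M.index = p ∧ (∀ a ∈ M, ∀ b ∈ M, a * b = b * a) := by
  haveI : Fact p.Prime := ⟨hp⟩
  have hZcard := card_center_eq hp hcard hna
  have hCle := commutator_le_center' hp hcard hna
  push_neg at hna
  obtain ⟨a, b, hab⟩ := hna
  have hx : a ∉ Subgroup.center G := fun h => hab (Subgroup.mem_center_iff.mp h b).symm
  set M := Subgroup.centralizer ({a} : Set G) with hM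
  have hZM : Subgroup.center G ≤ M := Subgroup.center_le_centralizer _
  have haM : a ∈ M := by
    rw [hM, Subgroup.mem_centralizer_iff]
    rintro h rfl
    rfl
  have hMne : M ≠ ⊤ := by
    intro h
    refine hx (Subgroup.mem_center_iff.mpr fun g => ?_)
    have : g ∈ M := h ▸ Subgroup.mem_top g
    exact (Subgroup.mem_centralizer_iff.mp this a rfl).symm
  have hMuniv : Nat.card M ∣ p ^ 3 := by
    rw [← hcard]
    exact ⟨M.index, (Subgroup.card_mul_index M).symm⟩
  obtain ⟨k, hk3, hkeq⟩ := (Nat.dvd_prime_pow hp).mp hMuniv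
  have hk2 : k = 2 := by
    rcases Nat.lt_or_ge k 2 with h2 | h2
    · exfalso
      interval_cases k
      · rw [pow_zero, Subgroup.card_eq_one] at hkeq
        have : a = 1 := by simpa [hkeq] using haM
        exact hx (this ▸ Subgroup.one_mem _)
      · have : Subgroup.center G = M := by
          refine Subgroup.eq_of_le_of_card_ge hZM ?_
          rw [hkeq, pow_one, hZcard]
        exact hx (this ▸ haM)
    · rcases Nat.lt_or_ge k 3 with h3 | h3
      · omega
      · exfalso
        have hk3' : k = 3 := by omega
        refine hMne (Subgroup.eq_top_of_card_eq M ?_)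
        rw [hkeq, hk3', hcard]
  have hMcard : Nat.card M = p ^ 2 := by rw [hkeq, hk2]
  have hMidx : M.index = p := by
    have hmul : Nat.card M * M.index = p ^ 3 := hcard ▸ Subgroup.card_mul_index M
    rw [hMcard] at hmul
    have hp2 : 0 < p ^ 2 := pow_pos hp.pos 2
    have : p ^ 2 * M.index = p ^ 2 * p := by rw [hmul]; ring
    exact Nat.eq_of_mul_eq_mul_left hp2 this
  have hMcomm : ∀ a' ∈ M, ∀ b' ∈ M, a' * b' = b' * a' := by
    intro a' ha' b' hb'
    have := IsPGroup.commutative_of_card_eq_prime_sq (G := M) hMcard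
      ⟨a', ha'⟩ ⟨b', hb'⟩
    exact congrArg Subtype.val this
  have hMnormal : M.Normal := by
    constructor
    intro m hm g
    have hc : ⁅g, m⁆ ∈ Subgroup.center G :=
      hCle (Subgroup.commutator_mem_commutator (Subgroup.mem_top g) (Subgroup.mem_top m))
    have : g * m * g⁻¹ = ⁅g, m⁆ * m := by group
    rw [this]
    exact mul_mem (hZM hc) hm
  exact ⟨M, hMnormal, hMidx, hMcomm⟩

end GroupFacts

section Classification

variable {p : ℕ} [Finite G]

lemma classification (hp : p.Prime) (hcard : Nat.card G = p ^ 3)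
    (hna : ¬ ∀ a b : G, a * b = b * a)
    {V : Type*} [AddCommGroup V] [Module ℂ V] [FiniteDimensional ℂ V]
    (ρ : Representation ℂ G V) (hirr : Rep.IsIrreducible ρ) :
    (Module.finrank ℂ V = 1 ∧ Rep.cod ρ ∈ ({1, p, p ^ 2} : Set ℕ))
    ∨ (1 < Module.finrank ℂ V ∧ Rep.cod ρ = p ^ 2) := by
  haveI : Fact p.Prime := ⟨hp⟩
  haveI hnt := hirr.1
  obtain ⟨z, hzc, hzZ, hz1, hzp⟩ := exists_central_z hp hcard hna
  have hZcard := card_center_eq hp hcard hna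
  have hCle := commutator_le_center' hp hcard hna
  by_cases h1 : Module.finrank ℂ V = 1
  · left
    refine ⟨h1, ?_⟩
    have hcod : Rep.cod ρ = (Rep.ker ρ).index := by rw [Rep.cod, h1, Nat.div_one]
    have hk := commutator_le_ker_of_finrank_one ρ h1
    have hzker : z ∈ Rep.ker ρ := hk hzc
    have hop : orderOf z = p := orderOf_eq_prime hzp hz1
    have hpdvd : p ∣ Nat.card (Rep.ker ρ) := by
      rw [← hop, ← Nat.card_zpowers]
      exact Subgroup.card_dvd_of_le ((Subgroup.zpowers_le).mpr hzker)
    have hidx : (Rep.ker ρ).index ∣ p ^ 3 := hcard ▸ Subgroup.index_dvd_card _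
    obtain ⟨k, hk3, hkeq⟩ := (Nat.dvd_prime_pow hp).mp hidx
    have hmul : Nat.card (Rep.ker ρ) * (Rep.ker ρ).index = p ^ 3 :=
      hcard ▸ Subgroup.card_mul_index _
    have hk2 : k ≤ 2 := by
      by_contra h
      have hk3' : k = 3 := by omega
      rw [hkeq, hk3'] at hmul
      have h3 : 0 < p ^ 3 := pow_pos hp.pos 3
      have hcard1 : Nat.card (Rep.ker ρ) = 1 := by
        have : Nat.card (Rep.ker ρ) * p ^ 3 = 1 * p ^ 3 := by rw [hmul, one_mul]
        exact Nat.eq_of_mul_eq_mul_right h3 this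
      rw [hcard1] at hpdvd
      exact absurd (Nat.le_of_dvd one_pos hpdvd) (by have := hp.two_le; omega)
    rw [hcod, hkeq]
    interval_cases k
    · left; rw [pow_zero]
    · right; left; rw [pow_one]
    · right; right; rfl
  · right
    have h0 : 0 < Module.finrank ℂ V := Module.finrank_pos
    have hgt : 1 < Module.finrank ℂ V := by omega
    refine ⟨hgt, ?_⟩
    have hZeq : ∀ y : G, y ∈ Subgroup.center G → y ≠ 1 →
        Subgroup.zpowers y = Subgroup.center G := by
      intro y hyZ hy1
      apply Subgroup.eq_of_le_of_card_ge ((Subgroup.zpowers_le).mpr hyZ)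
      have hyp : y ^ p = 1 := by
        have hdvd : orderOf (⟨y, hyZ⟩ : Subgroup.center G) ∣ p := by
          rw [← hZcard]; exact orderOf_dvd_natCard _
        rw [Subgroup.orderOf_mk] at hdvd
        obtain ⟨m, hm⟩ := hdvd
        calc y ^ p = (y ^ orderOf y) ^ m := by rw [← pow_mul, ← hm]
          _ = 1 := by rw [pow_orderOf_eq_one, one_pow]
      rw [Nat.card_zpowers, orderOf_eq_prime hyp hy1, hZcard]
    have hzker : z ∉ Rep.ker ρ := by
      intro hz
      refine h1 (finrank_eq_one_of_commute hirr ?_)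
      intro g h
      have hcm : ⁅g, h⁆ ∈ Rep.ker ρ := by
        have hmem : ⁅g, h⁆ ∈ Subgroup.center G := hCle
          (Subgroup.commutator_mem_commutator (Subgroup.mem_top g) (Subgroup.mem_top h))
        rw [← hZeq z hzZ hz1] at hmem
        obtain ⟨m, hm⟩ := hmem
        rw [← hm]
        exact Subgroup.zpow_mem _ hz m
      have hgh : g * h = ⁅g, h⁆ * (h * g) := by group
      rw [← map_mul, ← map_mul, hgh, map_mul, mem_rep_ker.mp hcm, one_mul]
    have hcentker : ∀ y, y ∈ Subgroup.center G → y ∈ Rep.ker ρ → y = 1 := by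
      intro y hyc hyk
      by_contra hy1
      refine hzker ?_
      have : z ∈ Subgroup.zpowers y := (hZeq y hyc hy1) ▸ hzZ
      obtain ⟨m, hm⟩ := this
      rw [← hm]
      exact Subgroup.zpow_mem _ hyk m
    have hker : Rep.ker ρ = ⊥ := by
      rw [Subgroup.eq_bot_iff_forall]
      intro k hk
      have hkc : k ∈ Subgroup.center G := by
        rw [Subgroup.mem_center_iff]
        intro g
        have hcm : ⁅k, g⁆ ∈ Rep.ker ρ := by
          have h2 : g * k⁻¹ * g⁻¹ ∈ Rep.ker ρ := (rep_ker_normal ρ).conj_mem _ (inv_mem hk) g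
          have he : ⁅k, g⁆ = k * (g * k⁻¹ * g⁻¹) := by group
          rw [he]
          exact mul_mem hk h2
        have hcz : ⁅k, g⁆ ∈ Subgroup.center G := hCle
          (Subgroup.commutator_mem_commutator (Subgroup.mem_top k) (Subgroup.mem_top g))
        have h1' := hcentker _ hcz hcm
        exact (commutatorElement_eq_one_iff_mul_comm.mp h1').symm
      exact hcentker _ hkc hk
    obtain ⟨ω, hω⟩ := schur_scalar hirr (ρ z) (fun g => by
      rw [← map_mul, ← map_mul]
      congr 1
      exact (Subgroup.mem_center_iff.mp hzZ g).symm)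
    have hω1 : ω ≠ 1 := by
      rintro rfl
      exact hzker (mem_rep_ker.mpr (by rw [hω, one_smul]))
    have hωp : ω ^ p = 1 := by
      have h1' : ρ (z ^ p) = 1 := by rw [hzp, map_one]
      rw [map_pow, hω, smul_pow, one_pow] at h1'
      exact smul_one_eq_one_iff.mp h1'
    set f : G →* ℂˣ :=
      (Units.map (LinearMap.det : (V →ₗ[ℂ] V) →* ℂ)).comp (Representation.asGroupHom ρ) with hf
    have hfz : f z = 1 := Abelianization.commutator_subset_ker f hzc
    have hdet : LinearMap.det (ρ z) = 1 := by
      have := congrArg Units.val hfz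
      simpa [hf, Representation.asGroupHom_apply] using this
    have hωd : ω ^ Module.finrank ℂ V = 1 := by
      rw [hω, LinearMap.det_smul] at hdet
      simpa using hdet
    have hpd : p ∣ Module.finrank ℂ V := by
      have ho : orderOf ω = p := orderOf_eq_prime hωp hω1
      rw [← ho]
      exact orderOf_dvd_of_pow_eq_one hωd
    obtain ⟨M, hMn, hMidx, hMcomm⟩ := exists_maximal_abelian hp hcard hna
    haveI := hMn
    have hMcommEnd : ∀ T ∈ ⇑ρ '' (M : Set G), ∀ T' ∈ ⇑ρ '' (M : Set G), T * T' = T' * T := by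
      rintro T ⟨a, ha, rfl⟩ T' ⟨b, hb, rfl⟩
      rw [← map_mul, ← map_mul, hMcomm a ha b hb]
    obtain ⟨v, hv0, hv⟩ := exists_common_eigenvector (Module.finrank ℂ V) V rfl hnt
      (⇑ρ '' (M : Set G)) hMcommEnd
    classical
    haveI : Fintype (G ⧸ M) := Fintype.ofFinite _
    set F : (G ⧸ M) → V := fun q => ρ (Quotient.out q) v with hF
    have hmemW : ∀ g : G, ρ g v ∈ Submodule.span ℂ (Set.range F) := by
      intro g
      set q' : G ⧸ M := (g : G ⧸ M) with hq'
      have haM : (Quotient.out q')⁻¹ * g ∈ M := by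
        rw [← QuotientGroup.eq]
        exact Quotient.out_eq' q'
      obtain ⟨c, hc⟩ := hv (ρ ((Quotient.out q')⁻¹ * g)) ⟨_, haM, rfl⟩
      have hgv : ρ g v = c • F q' := by
        have h2 : ρ g v = ρ (Quotient.out q') (ρ ((Quotient.out q')⁻¹ * g) v) := by
          have h3 : ρ (Quotient.out q') * ρ ((Quotient.out q')⁻¹ * g) = ρ g := by
            rw [← map_mul]
            congr 1
            group
          rw [← h3]
          rfl
        rw [h2, hc, map_smul]
      rw [hgv]
      exact Submodule.smul_mem _ _ (Submodule.subset_span ⟨q', rfl⟩)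
    have hWtop : Submodule.span ℂ (Set.range F) = ⊤ := by
      have hinv : ∀ g : G, ∀ w ∈ Submodule.span ℂ (Set.range F),
          ρ g w ∈ Submodule.span ℂ (Set.range F) := by
        intro g w hw
        induction hw using Submodule.span_induction with
        | mem x hx =>
          obtain ⟨q, rfl⟩ := hx
          have : ρ g (F q) = ρ (g * Quotient.out q) v := by
            rw [map_mul]
            rfl
          rw [this]
          exact hmemW _
        | zero => simp
        | add x y _ _ hx hy => rw [map_add]; exact Submodule.add_mem _ hx hy
        | smul c x _ hx => rw [map_smul]; exact Submodule.smul_mem _ _ hx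
      rcases hirr.2 _ hinv with hbot | htop
      · exfalso
        have hv' : v ∈ Submodule.span ℂ (Set.range F) := by
          have := hmemW 1
          simpa using this
        rw [hbot] at hv'
        exact hv0 (by simpa using hv')
      · exact htop
    have hle : Module.finrank ℂ V ≤ p := by
      have h1' : Module.finrank ℂ V = Module.finrank ℂ (⊤ : Submodule ℂ V) :=
        (finrank_top ℂ V).symm
      rw [h1', ← hWtop]
      refine le_trans (finrank_span_le_card (Set.range F)) ?_
      rw [Set.toFinset_card]
      refine le_trans (Fintype.card_range_le F) ?_
      rw [← Nat.card_eq_fintype_card, ← Subgroup.index_eq_card, hMidx]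
    have hd : Module.finrank ℂ V = p := le_antisymm hle (Nat.le_of_dvd (by omega) hpd)
    rw [Rep.cod, hker, Subgroup.index_bot, hcard, hd]
    have h3 : p ^ 3 = p ^ 2 * p := by ring
    rw [h3]
    exact Nat.mul_div_cancel _ hp.pos

end Classification

section Construction

variable {p : ℕ} [Finite G]

lemma one_mem_codSet : (1 : ℕ) ∈ codSet G := by
  refine ⟨ℂ, inferInstance, inferInstance, inferInstance, scalarRep 1, scalarRep_irr 1, ?_⟩
  rw [scalarRep_cod]
  have : (1 : G →* ℂˣ).ker = ⊤ := by
    ext g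
    simp [MonoidHom.mem_ker]
  rw [this, Subgroup.index_top]

lemma p_mem_codSet (hp : p.Prime) (hcard : Nat.card G = p ^ 3)
    (hna : ¬ ∀ a b : G, a * b = b * a) : p ∈ codSet G := by
  haveI : Fact p.Prime := ⟨hp⟩
  obtain ⟨M, hMn, hMidx, hMcomm⟩ := exists_maximal_abelian hp hcard hna
  haveI := hMn
  have hQcard : Nat.card (G ⧸ M) = p := by rw [← Subgroup.index_eq_card, hMidx]
  haveI : IsCyclic (G ⧸ M) := isCyclic_of_prime_card hQcard
  obtain ⟨φ, hφ⟩ := exists_injective_char (G ⧸ M)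
  set χ : G →* ℂˣ := φ.comp (QuotientGroup.mk' M) with hχ
  have hker : χ.ker = M := by
    ext g
    rw [MonoidHom.mem_ker, hχ, MonoidHom.comp_apply]
    constructor
    · intro h
      have : (QuotientGroup.mk' M) g = 1 := hφ (by rw [h, map_one])
      rwa [← QuotientGroup.eq_one_iff g]
    · intro h
      have : (QuotientGroup.mk' M) g = 1 := (QuotientGroup.eq_one_iff g).mpr h
      rw [this, map_one]
  refine ⟨ℂ, inferInstance, inferInstance, inferInstance, scalarRep χ, scalarRep_irr χ, ?_⟩
  rw [scalarRep_cod, hker, hMidx]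

set_option synthInstance.maxHeartbeats 1000000 in
set_option maxHeartbeats 2000000 in
lemma p_sq_mem_codSet (hp : p.Prime) (hcard : Nat.card G = p ^ 3)
    (hna : ¬ ∀ a b : G, a * b = b * a) : p ^ 2 ∈ codSet G := by
  haveI : Fact p.Prime := ⟨hp⟩
  classical
  haveI : Fintype G := Fintype.ofFinite G
  obtain ⟨z, hzc, hzZ, hz1, hzp⟩ := exists_central_z hp hcard hna
  have hord : orderOf z = p := orderOf_eq_prime hzp hz1
  set ω : ℂ := Complex.exp (2 * Real.pi * Complex.I / p) with hωdef
  have hprim : IsPrimitiveRoot ω p := Complex.isPrimitiveRoot_exp p hp.pos.ne'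
  have hω0 : ω ≠ 0 := Complex.exp_ne_zero _
  have hω1 : ω ≠ 1 := hprim.ne_one hp.one_lt
  have hωp : ω ^ p = 1 := hprim.pow_eq_one
  haveI : FiniteDimensional ℂ (G →₀ ℂ) :=
    (Finsupp.linearEquivFunOnFinite ℂ ℂ G).symm.finiteDimensional
  set R := congRep (Representation.ofMulAction ℂ G G) (MonoidAlgebra.coeffLinearEquiv ℂ) with hR
  set v : G →₀ ℂ := ∑ j ∈ Finset.range p, (ω ^ j)⁻¹ • Finsupp.single (z ^ j) (1 : ℂ) with hv
  have hv1 : v 1 = 1 := by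
    rw [hv, Finsupp.finset_sum_apply]
    rw [Finset.sum_eq_single 0]
    · simp
    · intro j hj hj0
      have hzj : z ^ j ≠ 1 := by
        intro h
        have := orderOf_dvd_of_pow_eq_one h
        rw [hord] at this
        have hjlt := Finset.mem_range.mp hj
        exact hj0 (Nat.eq_zero_of_dvd_of_lt this hjlt)
      simp [Finsupp.single_apply, hzj]
    · intro h
      exact absurd (Finset.mem_range.mpr hp.pos) h
  have hvne : v ≠ 0 := by
    intro h
    rw [h] at hv1
    simp at hv1
  obtain ⟨n, hn⟩ : ∃ n, p = n + 1 := ⟨p - 1, by have := hp.pos; omega⟩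
  have hveig : R z v = ω • v := by
    have hL : R z v = ∑ j ∈ Finset.range p, (ω ^ j)⁻¹ • Finsupp.single (z ^ (j + 1)) (1 : ℂ) := by
      rw [hv, map_sum]
      refine Finset.sum_congr rfl fun j _ => ?_
      rw [map_smul, hR, congRep_apply, show (MonoidAlgebra.coeffLinearEquiv ℂ) (Representation.ofMulAction ℂ G G z ((MonoidAlgebra.coeffLinearEquiv ℂ).symm (Finsupp.single (z ^ j) 1))) = Finsupp.single (z • z ^ j) (1:ℂ) by simp]
      congr 1
      rw [smul_eq_mul, ← pow_succ']
    have hRt : ω • v = ∑ j ∈ Finset.range p, (ω * (ω ^ j)⁻¹) • Finsupp.single (z ^ j) (1 : ℂ) := by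
      rw [hv, Finset.smul_sum]
      refine Finset.sum_congr rfl fun j _ => ?_
      rw [smul_smul]
    rw [hL, hRt, hn, Finset.sum_range_succ, Finset.sum_range_succ']
    congr 1
    · refine Finset.sum_congr rfl fun j _ => ?_
      congr 1
      rw [pow_succ]
      field_simp
    · have hz0 : z ^ (n + 1) = z ^ 0 := by rw [← hn, hzp, pow_zero]
      rw [hz0]
      congr 1
      have : ω * ω ^ n = 1 := by
        rw [← pow_succ', ← hn, hωp]
      field_simp
      linear_combination -this
  set U := Module.End.eigenspace (R z) ω with hU
  have hvU : v ∈ U := Module.End.mem_eigenspace_iff.mpr hveig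
  have hUinv : ∀ g : G, ∀ u ∈ U, R g u ∈ U := by
    intro g u hu
    rw [hU, Module.End.mem_eigenspace_iff] at hu ⊢
    have hcomm : R z (R g u) = R g (R z u) := by
      rw [← Module.End.mul_apply, ← map_mul]
      have : z * g = g * z := (Subgroup.mem_center_iff.mp hzZ g).symm
      rw [this, map_mul, Module.End.mul_apply]
    rw [hcomm, hu, map_smul]
  haveI hUnt : Nontrivial U := by
    refine ⟨⟨⟨v, hvU⟩, 0, ?_⟩⟩
    intro h
    exact hvne (by simpa using congrArg Subtype.val h)
  set σ := subRep R U hUinv with hσ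
  obtain ⟨W, hW, hWbot, hWirr⟩ := exists_irreducible_subrep σ hUnt
  set θ := subRep σ W hW with hθ
  have hθz : ∀ w : W, θ z w = ω • w := by
    intro w
    refine Subtype.ext (Subtype.ext ?_)
    have h2 : R z ((w : U) : G →₀ ℂ) = ω • ((w : U) : G →₀ ℂ) :=
      Module.End.mem_eigenspace_iff.mp (w : U).2
    show R z ((w : U) : G →₀ ℂ) = (((ω • w : ↥W) : U) : G →₀ ℂ)
    rw [h2]
    rfl
  haveI : Module.Free ℂ ↥W := Module.Free.of_divisionRing (K := ℂ) (V := ↥W)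
  haveI : FiniteDimensional ℂ ↥W := inferInstance
  set d := Module.finrank ℂ ↥W with hd
  set e : ↥W ≃ₗ[ℂ] (Fin d → ℂ) := (Module.finBasisOfFinrankEq ℂ ↥W hd.symm).equivFun with he
  set θ' := congRep (V := ↥W) (V' := Fin d → ℂ) θ e with hθ'
  have hθ'irr := congRep_irr e hWirr
  have hθ'z : θ' z = ω • 1 := by
    refine LinearMap.ext fun x => ?_
    show e (θ z (e.symm x)) = (ω • (1 : Module.End ℂ (Fin d → ℂ))) x
    rw [hθz, map_smul]
    simp
  rcases classification hp hcard hna θ' hθ'irr with ⟨hrank1, _⟩ | ⟨_, hcod⟩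
  · exfalso
    have hzker : z ∈ Rep.ker θ' := commutator_le_ker_of_finrank_one θ' hrank1 hzc
    rw [mem_rep_ker, hθ'z] at hzker
    haveI := hθ'irr.1
    exact hω1 (smul_one_eq_one_iff.mp hzker)
  · exact ⟨Fin d → ℂ, inferInstance, inferInstance, inferInstance, θ', hθ'irr, hcod⟩

end Construction

end StmtAux

/-- If `G` is a non-abelian group of order `p^3` for an odd prime `p`,
then `cod(G) = {1, p, p^2}`. -/
theorem stmt13 {p : ℕ} (hp : p.Prime) (hodd : Odd p) (G : Type*) [Group G] [Finite G]
    (hcard : Nat.card G = p ^ 3) (hna : ¬ ∀ a b : G, a * b = b * a) :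
    codSet G = {1, p, p ^ 2} := by
  apply Set.eq_of_subset_of_subset
  · rintro n ⟨V, _, _, _, ρ, hirr, rfl⟩
    rcases StmtAux.classification hp hcard hna ρ hirr with ⟨_, hmem⟩ | ⟨_, hcod⟩
    · exact hmem
    · rw [hcod]
      right; right; rfl
  · rintro n (rfl | rfl | rfl)
    · exact StmtAux.one_mem_codSet
    · exact StmtAux.p_mem_codSet hp hcard hna
    · exact StmtAux.p_sq_mem_codSet hp hcard hna
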